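/- Let L be a Leibniz algebra over F, (l,r,V) a representation of L, and x ∈ L. Then for every integer k ≥ 1 one has l_x^k = (-1)^{k+1} l_x ∘ r_x^{k-1}. In particular, if r_x is a nilpotent endomorphism of V, then l_x is also nilpotent. -/
import Mathlib


/-- For a representation `(l, r, V)` of a Leibniz algebra `L` and
`x ∈ L`, one has `l_x^k = (-1)^{k+1} l_x ∘ r_x^{k-1}` for every `k ≥ 1`;
in particular, if `r_x` is nilpotent then so is `l_x`. -/
theorem left_action_power_formula
    (F L V : Type*) [Field F]
    [AddCommGroup L] [Module F L]
    [AddCommGroup V] [Module F V]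
    (b : L →ₗ[F] L →ₗ[F] L)
    (hb : ∀ x y z : L, b x (b y z) = b (b x y) z - b (b x z) y)
    (l r : L →ₗ[F] Module.End F V)
    (hr : ∀ x y : L, r (b x y) = r y * r x - r x * r y)
    (hlr : ∀ x y : L, l (b x y) = r y * l x - l x * r y)
    (hll : ∀ x y : L, l (b x y) = r y * l x + l x * l y)
    (x : L) :
    (∀ k : ℕ, 1 ≤ k → (l x) ^ k = ((-1 : F) ^ (k + 1)) • (l x * (r x) ^ (k - 1))) ∧
    (IsNilpotent (r x) → IsNilpotent (l x)) := by
  have key : l x * l x = -(l x * r x) := by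
    have h := (hlr x x).symm.trans (hll x x)
    rw [sub_eq_add_neg] at h
    exact (add_left_cancel h).symm
  have main : ∀ k : ℕ, 1 ≤ k →
      (l x) ^ k = ((-1 : F) ^ (k + 1)) • (l x * (r x) ^ (k - 1)) := by
    intro k hk
    induction k with
    | zero => omega
    | succ n ih =>
      rcases Nat.eq_or_lt_of_le hk with h1 | h1
      · simp [← h1]
      · have hn : 1 ≤ n := by omega
        have ihn := ih hn
        have hn1 : n - 1 + 1 = n := Nat.succ_pred_eq_of_pos hn
        calc (l x) ^ (n + 1) = l x * (l x) ^ n := by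
              exact pow_succ' _ _
          _ = l x * (((-1 : F) ^ (n + 1)) • (l x * (r x) ^ (n - 1))) := by rw [ihn]
          _ = ((-1 : F) ^ (n + 1)) • ((l x * l x) * (r x) ^ (n - 1)) := by
              rw [mul_smul_comm, mul_assoc]
          _ = ((-1 : F) ^ (n + 1)) • (-(l x * r x) * (r x) ^ (n - 1)) := by rw [key]
          _ = ((-1 : F) ^ (n + 1 + 1)) • (l x * (r x) ^ (n + 1 - 1)) := by
              rw [pow_succ]
              simp only [Nat.add_sub_cancel]
              rw [neg_mul, mul_assoc, ← pow_succ', hn1, smul_neg, ← neg_smul]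
              congr 1
              ring
  refine ⟨main, ?_⟩
  rintro ⟨n, hn⟩
  refine ⟨n + 1, ?_⟩
  rw [main (n + 1) (by omega)]
  simp [hn]
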